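/- If G is a finite C-I cograph, then G is claw-free, i.e., G contains no induced subgraph isomorphic to the complete bipartite graph K_{1,3}. -/

import Mathlib

open SimpleGraph

/-- The cover-incomparability graph of a poset `V`: distinct `u, v` are adjacent iff
`u` covers `v`, `v` covers `u`, or `u` and `v` are incomparable. -/
def ciGraph (V : Type*) [PartialOrder V] : SimpleGraph V where
  Adj u v := u ⋖ v ∨ v ⋖ u ∨ (¬ u ≤ v ∧ ¬ v ≤ u)
  symm := by
    constructor
    intro u v h
    rcases h with h | h | h
    · exact Or.inr (Or.inl h)
    · exact Or.inl h
    · exact Or.inr (Or.inr ⟨h.2, h.1⟩)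
  loopless := by
    constructor
    intro u h
    rcases h with h | h | h
    · exact h.ne rfl
    · exact h.ne rfl
    · exact h.1 le_rfl

/-- A graph is a C-I graph if it is isomorphic to the cover-incomparability graph
of some finite poset. -/
def IsCIGraph {W : Type u} (G : SimpleGraph W) : Prop :=
  ∃ (V : Type u) (inst : PartialOrder V) (_ : Finite V),
    Nonempty (G ≃g @ciGraph V inst)

/-- A vertex is simplicial if its neighborhood is a clique. -/
def IsSimplicialVertex {V : Type*} (G : SimpleGraph V) (v : V) : Prop :=
  G.IsClique (G.neighborSet v)

/-- A graph is chordal if it has no induced cycle of length greater than 3. -/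
def IsChordal {V : Type*} (G : SimpleGraph V) : Prop :=
  ∀ n : ℕ, 3 < n → IsEmpty (cycleGraph n ↪g G)

/-- A cograph: no induced path on four vertices. -/
def IsCograph {V : Type*} (G : SimpleGraph V) : Prop :=
  ¬ ∃ a b c d : V, a ≠ b ∧ a ≠ c ∧ a ≠ d ∧ b ≠ c ∧ b ≠ d ∧ c ≠ d ∧
    G.Adj a b ∧ G.Adj b c ∧ G.Adj c d ∧ ¬ G.Adj a c ∧ ¬ G.Adj a d ∧ ¬ G.Adj b d

/-- `G` has exactly two independent simplicial vertices. -/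
def HasExactlyTwoIndepSimplicial {V : Type*} (G : SimpleGraph V) : Prop :=
  (∃ a b : V, a ≠ b ∧ ¬ G.Adj a b ∧ IsSimplicialVertex G a ∧ IsSimplicialVertex G b) ∧
  ¬ ∃ a b c : V, a ≠ b ∧ a ≠ c ∧ b ≠ c ∧ ¬ G.Adj a b ∧ ¬ G.Adj a c ∧ ¬ G.Adj b c ∧
    IsSimplicialVertex G a ∧ IsSimplicialVertex G b ∧ IsSimplicialVertex G c

/-- A complete graph: all distinct vertices adjacent. -/
def IsCompleteGraph {V : Type*} (G : SimpleGraph V) : Prop :=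
  ∀ u v : V, u ≠ v → G.Adj u v

/-- A maximal clique of `G`. -/
def IsMaxClique {V : Type*} (G : SimpleGraph V) (s : Set V) : Prop :=
  G.IsClique s ∧ ∀ t : Set V, G.IsClique t → s ⊆ t → t = s


private lemma ciGraph_adj {W : Type*} [PartialOrder W] {u v : W} :
    (ciGraph W).Adj u v ↔ (u ⋖ v ∨ v ⋖ u ∨ (¬ u ≤ v ∧ ¬ v ≤ u)) := Iff.rfl

/-- Non-adjacent distinct vertices of a C-I graph are comparable and non-covering. -/
private lemma ci_nonadj {W : Type*} [PartialOrder W] {u v : W} (hne : u ≠ v)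
    (h : ¬ (ciGraph W).Adj u v) :
    (u < v ∧ ¬ u ⋖ v) ∨ (v < u ∧ ¬ v ⋖ u) := by
  rw [ciGraph_adj] at h
  push_neg at h
  obtain ⟨h1, h2, h3⟩ := h
  by_cases huv : u ≤ v
  · exact Or.inl ⟨lt_of_le_of_ne huv hne, h1⟩
  · exact Or.inr ⟨lt_of_le_of_ne (h3 huv) hne.symm, h2⟩

/-- A chain p < q < r with p not covered-related to q yields a contradiction to cograph. -/
private lemma ci_chain3 {W : Type u} [PartialOrder W] [Finite W]
    (hcog : IsCograph (ciGraph W)) {p q r : W}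
    (hpq : p < q) (hnc : ¬ p ⋖ q) (hqr : q < r) : False := by
  obtain ⟨s, hps, hsq⟩ := exists_le_covBy_of_lt hpq
  have hpslt : p < s := by
    rcases lt_or_eq_of_le hps with h | h
    · exact h
    · exact absurd (h ▸ hsq) hnc
  obtain ⟨t, hpt, hts⟩ := exists_le_covBy_of_lt hpslt
  obtain ⟨v, hqv, hvr⟩ := exists_covBy_le_of_lt hqr
  have htq : t < q := hts.lt.trans hsq.lt
  have htv : t < v := htq.trans hqv.lt
  have hsv : s < v := hsq.lt.trans hqv.lt
  apply hcog
  refine ⟨t, s, q, v, hts.ne, htq.ne, htv.ne, hsq.ne, hsv.ne, hqv.ne, ?_, ?_, ?_, ?_, ?_, ?_⟩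
  · exact Or.inl hts
  · exact Or.inl hsq
  · exact Or.inl hqv
  · rw [ciGraph_adj]; push_neg
    exact ⟨not_covBy_of_lt_of_lt hts.lt hsq.lt, fun h => absurd (htq.trans h.lt) (lt_irrefl t),
      fun h => absurd htq.le h⟩
  · rw [ciGraph_adj]; push_neg
    exact ⟨not_covBy_of_lt_of_lt htq hqv.lt, fun h => absurd (h.lt.trans htv) (lt_irrefl v),
      fun h => absurd htv.le h⟩
  · rw [ciGraph_adj]; push_neg
    exact ⟨not_covBy_of_lt_of_lt hsq.lt hqv.lt, fun h => absurd (h.lt.trans hsv) (lt_irrefl v),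
      fun h => absurd hsv.le h⟩

/-- A finite C-I cograph has no independent set of size 3. -/
private lemma ci_no_indep3 {W : Type u} [PartialOrder W] [Finite W]
    (hcog : IsCograph (ciGraph W)) {a b c : W}
    (hab : a ≠ b) (hac : a ≠ c) (hbc : b ≠ c)
    (nab : ¬ (ciGraph W).Adj a b) (nac : ¬ (ciGraph W).Adj a c)
    (nbc : ¬ (ciGraph W).Adj b c) : False := by
  rcases ci_nonadj hab nab with ⟨h1, n1⟩ | ⟨h1, n1⟩ <;>
  rcases ci_nonadj hac nac with ⟨h2, n2⟩ | ⟨h2, n2⟩ <;>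
  rcases ci_nonadj hbc nbc with ⟨h3, n3⟩ | ⟨h3, n3⟩
  · exact ci_chain3 hcog h1 n1 h3
  · exact ci_chain3 hcog h2 n2 h3
  · exact absurd ((h1.trans h3).trans h2) (lt_irrefl a)
  · exact ci_chain3 hcog h2 n2 h1
  · exact ci_chain3 hcog h1 n1 h2
  · exact absurd ((h2.trans h3).trans h1) (lt_irrefl a)
  · exact ci_chain3 hcog h3 n3 h2
  · exact ci_chain3 hcog h3 n3 h1

/-- A finite C-I cograph is claw-free. -/
theorem CI_cograph_clawFree {V : Type u} [Finite V] (G : SimpleGraph V)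
    (hcog : IsCograph G) (hCI : IsCIGraph G) :
    ¬ ∃ x a b c : V, x ≠ a ∧ x ≠ b ∧ x ≠ c ∧ a ≠ b ∧ a ≠ c ∧ b ≠ c ∧
      G.Adj x a ∧ G.Adj x b ∧ G.Adj x c ∧ ¬ G.Adj a b ∧ ¬ G.Adj a c ∧ ¬ G.Adj b c := by
  rintro ⟨x, a, b, c, hxa, hxb, hxc, hab, hac, hbc, axa, axb, axc, nab, nac, nbc⟩
  obtain ⟨W, instW, instF, ⟨f⟩⟩ := hCI
  have hcog' : IsCograph (@ciGraph W instW) := by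
    rintro ⟨p, q, r, t, h1, h2, h3, h4, h5, h6, e1, e2, e3, n1, n2, n3⟩
    apply hcog
    refine ⟨f.symm p, f.symm q, f.symm r, f.symm t,
      fun h => h1 (f.symm.injective h), fun h => h2 (f.symm.injective h),
      fun h => h3 (f.symm.injective h), fun h => h4 (f.symm.injective h),
      fun h => h5 (f.symm.injective h), fun h => h6 (f.symm.injective h),
      f.symm.map_adj_iff.mpr e1, f.symm.map_adj_iff.mpr e2, f.symm.map_adj_iff.mpr e3,
      fun h => n1 (f.symm.map_adj_iff.mp h), fun h => n2 (f.symm.map_adj_iff.mp h),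
      fun h => n3 (f.symm.map_adj_iff.mp h)⟩
  exact ci_no_indep3 hcog' (fun h => hab (f.injective h)) (fun h => hac (f.injective h))
    (fun h => hbc (f.injective h))
    (fun h => nab (f.map_adj_iff.mp h)) (fun h => nac (f.map_adj_iff.mp h))
    (fun h => nbc (f.map_adj_iff.mp h))
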